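/- In the one-agent linear-sequestration economy with quota regulation (compliance region Z(m)={m}×R≤0×R≤0), for every m∈[−1,0] a Z(m)-compliant quota equilibrium exists, and at every such equilibrium the total net CO2 emission equals −m; moreover the equilibrium consumption-production pair for m=−1/2, namely x=(0,0,3/4), y=((1,−1,1),(−1/2,0,−1/4)) with price (−1/4,1/4,1/2), is the unique quota equilibrium for m=−1/2 and is full Pareto optimal among all quota-compliant pairs for all quotas m∈[−1,0]. -/

import Mathlib

noncomputable section

/-- Dot product on ℝ³ (as nested pairs). -/
def dot3 (p z : ℝ × ℝ × ℝ) : ℝ := p.1 * z.1 + p.2.1 * z.2.1 + p.2.2 * z.2.2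

/-- Consumption set {0} × ℝ≥0² (no consumption of CO2). -/
def X0 : Set (ℝ × ℝ × ℝ) := {z | z.1 = 0 ∧ 0 ≤ z.2.1 ∧ 0 ≤ z.2.2}

/-- Endowment (0,1,0): one unit of coal. -/
def e0 : ℝ × ℝ × ℝ := (0, 1, 0)

/-- First firm: burn r units of coal to get r units of electricity and r units of CO2. -/
def Y1 : Set (ℝ × ℝ × ℝ) := {y | ∃ r : ℝ, 0 ≤ r ∧ y = (r, -r, r)}

/-- Second firm: use r units of electricity to sequester 2r units of CO2. -/
def Y2 : Set (ℝ × ℝ × ℝ) := {y | ∃ r : ℝ, 0 ≤ r ∧ y = (-(2*r), 0, -r)}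

/-- Total net CO2 emission. -/
def emiss (x y1 y2 : ℝ × ℝ × ℝ) : ℝ := e0.1 + y1.1 + y2.1 - x.1

/-- `Z(m)`-compliant quota equilibrium of the one-agent economy with firms `Y1`, `Y2`,
compliance region Z(m) = {m} × ℝ≤0 × ℝ≤0, the single agent owning all firms and all
quota revenue `p₁·m`. -/
def QEq1 (m : ℝ) (x y1 y2 p : ℝ × ℝ × ℝ) : Prop :=
  |p.1| + |p.2.1| + |p.2.2| = 1 ∧
  y1 ∈ Y1 ∧ (∀ z ∈ Y1, dot3 p z ≤ dot3 p y1) ∧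
  y2 ∈ Y2 ∧ (∀ z ∈ Y2, dot3 p z ≤ dot3 p y2) ∧
  x ∈ X0 ∧
  dot3 p x ≤ dot3 p e0 + dot3 p y1 + dot3 p y2 + p.1 * m ∧
  (∀ z ∈ X0, dot3 p z ≤ dot3 p e0 + dot3 p y1 + dot3 p y2 + p.1 * m → z.2.2 ≤ x.2.2) ∧
  x.1 - e0.1 - y1.1 - y2.1 = m ∧
  x.2.1 - e0.2.1 - y1.2.1 - y2.2.1 ≤ 0 ∧
  x.2.2 - e0.2.2 - y1.2.2 - y2.2.2 ≤ 0

set_option maxHeartbeats 1600000 in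
/-- for every m ∈ [−1,0] a quota equilibrium exists and its total net CO2
emission equals −m; the displayed triple is the unique quota equilibrium for m = −1/2;
and its consumption-production pair is full Pareto optimal among all quota-compliant
pairs for all quotas m ∈ [−1,0] (its utility 3/4 − (1/2)²/2 is maximal). -/
theorem stmt19 :
    (∀ m ∈ Set.Icc (-1:ℝ) 0, ∃ x y1 y2 p, QEq1 m x y1 y2 p) ∧
    (∀ m ∈ Set.Icc (-1:ℝ) 0, ∀ x y1 y2 p, QEq1 m x y1 y2 p → emiss x y1 y2 = -m) ∧
    (∀ x y1 y2 p, QEq1 (-(1/2)) x y1 y2 p ↔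
      (x = (0, 0, 3/4) ∧ y1 = (1, -1, 1) ∧ y2 = (-(1/2), 0, -(1/4)) ∧
        p = (-(1/4), 1/4, 1/2))) ∧
    (∀ m ∈ Set.Icc (-1:ℝ) 0, ∀ x y1 y2 : ℝ × ℝ × ℝ,
      x ∈ X0 → y1 ∈ Y1 → y2 ∈ Y2 →
      x.1 - e0.1 - y1.1 - y2.1 = m →
      x.2.1 - e0.2.1 - y1.2.1 - y2.2.1 ≤ 0 →
      x.2.2 - e0.2.2 - y1.2.2 - y2.2.2 ≤ 0 →
      x.2.2 - (-m)^2/2 ≤ 3/4 - (1/2:ℝ)^2/2) := by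

  refine ⟨?_, ?_, ?_, ?_⟩
  · -- existence for every m ∈ [-1,0]
    rintro m ⟨hm1, hm0⟩
    refine ⟨(0, 0, (1-m)/2), (1, -1, 1), (-(1+m), 0, -((1+m)/2)),
      (-(1/4), 1/4, 1/2), ?_, ⟨1, by norm_num⟩, ?_, ⟨(1+m)/2, by linarith, ?_⟩, ?_,
      ⟨rfl, le_refl _, by linarith⟩, ?_, ?_, ?_, ?_, ?_⟩
    · show |(-(1/4):ℝ)| + |(1/4:ℝ)| + |(1/2:ℝ)| = 1
      rw [abs_neg, abs_of_nonneg (by norm_num : (0:ℝ) ≤ 1/4),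
        abs_of_nonneg (by norm_num : (0:ℝ) ≤ 1/2)]
      norm_num
    · rintro z ⟨t, ht, rfl⟩
      simp [dot3]; linarith
    · rw [show (2:ℝ)*((1+m)/2) = 1+m from by ring]
    · rintro z ⟨t, ht, rfl⟩
      simp [dot3]; linarith
    · simp [dot3, e0]; linarith
    · rintro z ⟨hz1, hz2, hz3⟩ hbz
      simp [dot3, e0, hz1] at hbz ⊢
      linarith
    · show (0:ℝ) - 0 - 1 - -(1+m) = m
      ring
    · simp [e0]
    · simp [e0]; linarith
  · -- emission equals -m at every equilibrium
    rintro m _ x y1 y2 p ⟨-, -, -, -, -, ⟨hx1, -, -⟩, -, -, hq, -, -⟩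
    simp only [emiss, e0] at *
    linarith
  · -- uniqueness for m = -1/2
    rintro x y1 y2 p
    constructor
    · rintro ⟨hnorm, ⟨r, hr, rfl⟩, hmax1, ⟨s, hs, rfl⟩, hmax2, ⟨hx1, hx2, hx3⟩,
        hbud, hopt, hq, hcoal, helec⟩
      obtain ⟨p1, p2, p3⟩ := p
      obtain ⟨c1, c2, c3⟩ := x
      simp only [dot3, e0, X0, Y1, Y2, Set.mem_setOf_eq] at *
      subst hx1
      -- firm optimality facts
      have hA : p1 - p2 + p3 ≤ 0 := by
        have := hmax1 (r+1, -(r+1), r+1) ⟨r+1, by linarith, rfl⟩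
        simp only at this; nlinarith
      have hA0 : 0 ≤ r * (p1 - p2 + p3) := by
        have := hmax1 (0, 0, 0) ⟨0, le_refl _, by norm_num⟩
        simp only at this; nlinarith
      have hrA : p1 * r + p2 * (-r) + p3 * r = 0 := by
        have h1 : r * (p1 - p2 + p3) ≤ 0 := by nlinarith
        have h2 : r * (p1 - p2 + p3) = 0 := le_antisymm h1 hA0
        linear_combination h2
      have hB : -(2*p1) - p3 ≤ 0 := by
        have := hmax2 (-(2*(s+1)), 0, -(s+1)) ⟨s+1, by linarith, rfl⟩
        simp only at this; nlinarith
      have hB0 : 0 ≤ s * (-(2*p1) - p3) := by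
        have := hmax2 (0, 0, 0) ⟨0, le_refl _, by norm_num⟩
        simp only at this; nlinarith
      have hsB : p1 * (-(2*s)) + p2 * 0 + p3 * (-s) = 0 := by
        have h1 : s * (-(2*p1) - p3) ≤ 0 := by nlinarith
        have h2 : s * (-(2*p1) - p3) = 0 := le_antisymm h1 hB0
        linear_combination h2
      -- compliance facts
      have hrs : -r + 2*s = -(1/2) := by linarith
      have hrle : r ≤ 1 := by linarith
      have hc3e : c3 ≤ r - s := by linarith
      -- the budget RHS equals p2 - p1/2
      have hbud' : p2 * c2 + p3 * c3 ≤ p2 - p1/2 := by linarith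
      -- demand characterization
      have key : ∀ T : ℝ, 0 ≤ T → p3 * T ≤ p2 - p1/2 → T ≤ c3 := by
        intro T hT hle
        refine hopt (0, 0, T) ⟨rfl, le_refl _, hT⟩ ?_
        show p1 * 0 + p2 * 0 + p3 * T ≤ _
        linarith
      -- p3 > 0
      have hp3 : 0 < p3 := by
        by_contra h
        push_neg at h
        rcases lt_or_eq_of_le h with h3 | h3
        · set T := max (c3 + 1) ((p2 - p1/2)/p3) with hT
          have hT1 : c3 + 1 ≤ T := le_max_left _ _
          have hT2 : (p2 - p1/2)/p3 ≤ T := le_max_right _ _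
          have := key T (by linarith) (by
            have := (div_le_iff_of_neg h3).mp hT2
            linarith)
          linarith
        · have hp1 : 0 ≤ p1 := by linarith
          have := key (c3 + 1) (by linarith) (by
            rw [h3]
            have h0 : (0:ℝ) * (c3 + 1) = 0 := by ring
            rw [h0]; linarith)
          linarith
      have hp1lb : -(p3/2) ≤ p1 := by linarith
      have hp2 : 0 < p2 := by linarith
      have hRpos : 0 ≤ (p2 - p1/2)/p3 := by
        apply div_nonneg _ (le_of_lt hp3); linarith
      have hmc : p3 * ((p2 - p1/2)/p3) = p2 - p1/2 := by
        field_simp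
      have hub := key ((p2 - p1/2)/p3) hRpos (le_of_eq hmc)
      have hub' : p2 - p1/2 ≤ p3 * c3 := by
        rw [div_le_iff₀ hp3] at hub; linarith
      have hc2 : c2 = 0 := by nlinarith
      have hc3v : p3 * c3 = p2 - p1/2 := by nlinarith
      -- s must be positive
      have hspos : 0 < s := by
        rcases lt_or_eq_of_le hs with h | h
        · exact h
        · exfalso
          -- s = 0, r = 1/2, A = 0 since r > 0
          have hr2 : r = 1/2 := by linarith
          have hA' : p1 - p2 + p3 = 0 := by
            rcases lt_or_eq_of_le hA with h' | h'
            · exfalso; nlinarith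
            · linarith
          -- c3 ≤ 1/2, p3 c3 = p1/2 + p3
          have : p3 * c3 ≤ p3 * (1/2) := by
            apply mul_le_mul_of_nonneg_left _ (le_of_lt hp3)
            rw [← h] at hc3e; linarith
          nlinarith
      have hBz : -(2*p1) - p3 = 0 := by
        rcases lt_or_eq_of_le hB with h' | h'
        · exfalso; nlinarith
        · linarith
      have hAz : p1 - p2 + p3 = 0 := by
        rcases lt_or_eq_of_le hA with h' | h'
        · exfalso; nlinarith
        · linarith
      -- determine the price
      have hp1v : p1 = -(p3/2) := by linarith
      have hp2v : p2 = p3/2 := by linarith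
      have hnorm' : 2 * p3 = 1 := by
        rw [hp1v, hp2v] at hnorm
        rw [abs_neg, abs_of_nonneg (by linarith : (0:ℝ) ≤ p3/2),
          abs_of_nonneg (le_of_lt hp3)] at hnorm
        linarith
      have hp3v : p3 = 1/2 := by linarith
      have hc3f : c3 = 3/4 := by nlinarith
      have hsv : s = 1/4 := by
        have h1 : 1/4 ≤ s := by linarith
        have h2 : s ≤ 1/4 := by linarith
        linarith
      have hrv : r = 1 := by linarith
      refine ⟨?_, ?_, ?_, ?_⟩
      · simp [Prod.ext_iff, hc2, hc3f]
      · simp [Prod.ext_iff, hrv]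
      · simp [Prod.ext_iff, hsv]; norm_num
      · simp [Prod.ext_iff, hp1v, hp2v, hp3v]; norm_num
    · rintro ⟨rfl, rfl, rfl, rfl⟩
      refine ⟨?_, ⟨1, by norm_num⟩, ?_, ⟨1/4, by norm_num⟩, ?_,
        ⟨rfl, le_refl _, by norm_num⟩, ?_, ?_, ?_, ?_, ?_⟩
      · show |(-(1/4):ℝ)| + |(1/4:ℝ)| + |(1/2:ℝ)| = 1
        rw [abs_neg, abs_of_nonneg (by norm_num : (0:ℝ) ≤ 1/4),
          abs_of_nonneg (by norm_num : (0:ℝ) ≤ 1/2)]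
        norm_num
      · rintro z ⟨t, ht, rfl⟩; simp [dot3]; linarith
      · rintro z ⟨t, ht, rfl⟩; simp [dot3]; linarith
      · simp [dot3, e0]; norm_num
      · rintro z ⟨hz1, hz2, hz3⟩ hbz
        simp [dot3, e0, hz1] at hbz ⊢; linarith
      · simp [e0]; norm_num
      · simp [e0]
      · simp [e0]; norm_num
  · -- Pareto optimality
    rintro m ⟨hm1, hm0⟩ x y1 y2 ⟨hx1, hx2, hx3⟩ ⟨r, hr, rfl⟩ ⟨s, hs, rfl⟩ hq hcoal helec
    simp only [e0] at hq hcoal helec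
    nlinarith [sq_nonneg (m + 1/2)]
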